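/- Let N ≥ 2, α ∈ (0,1) and M > 0. Let Ω ⊂ ℝ^N be a bounded open set with nonempty boundary ∂Ω such that ℋ^{N-1}(∂Ω ∩ B_r(y)) ≤ M r^{N-1} for every y ∈ ∂Ω and every r > 0. Then there exists c > 0, depending only on N, α and M, such that for every x ∈ Ω: ∫_{∂Ω} |x - y|^{α - N} dℋ^{N-1}(y) ≤ c · dist(x, ∂Ω)^{α - 1}. -/
import Mathlib


open MeasureTheory Set

private lemma aux_pow_eq (N : ℕ) (α d M : ℝ) (hd : 0 < d) (k : ℕ) :
    ((2:ℝ)^k * d) ^ (α - N) * (M * (((2:ℝ)^(k+2) * d) ^ ((N:ℝ) - 1))) =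
      (M * (2:ℝ) ^ (2 * ((N:ℝ) - 1)) * d ^ (α - 1)) * ((2:ℝ) ^ (α - 1)) ^ k := by
  have h2 : (0:ℝ) < 2 := two_pos
  have hx : ∀ a b : ℝ, (2:ℝ) ^ a * (2:ℝ) ^ b = (2:ℝ) ^ (a + b) :=
    fun a b => (Real.rpow_add h2 a b).symm
  have hdx : ∀ a b : ℝ, d ^ a * d ^ b = d ^ (a + b) :=
    fun a b => (Real.rpow_add hd a b).symm
  have key : ∀ A B C D E F G : ℝ, A + C = E + G → B + D = F →
      (2:ℝ)^A * d^B * (M * ((2:ℝ)^C * d^D)) = M * (2:ℝ)^E * d^F * (2:ℝ)^G := by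
    intro A B C D E F G h1 h2'
    calc (2:ℝ)^A * d^B * (M * ((2:ℝ)^C * d^D)) = M * ((2:ℝ)^A * (2:ℝ)^C) * (d^B * d^D) := by
          ring
      _ = M * (2:ℝ)^(A+C) * d^(B+D) := by rw [hx, hdx]
      _ = M * ((2:ℝ)^E * (2:ℝ)^G) * d^F := by rw [h1, h2', ← hx]
      _ = _ := by ring
  rw [Real.mul_rpow (by positivity) hd.le, Real.mul_rpow (by positivity) hd.le,
      ← Real.rpow_natCast (2:ℝ) k, ← Real.rpow_natCast (2:ℝ) (k+2),
      ← Real.rpow_mul h2.le, ← Real.rpow_mul h2.le,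
      ← Real.rpow_natCast ((2:ℝ) ^ (α - 1)) k, ← Real.rpow_mul h2.le]
  exact key _ _ _ _ _ _ _ (by push_cast; ring) (by ring)

/-- If `Ω ⊂ ℝ^N` is bounded open with nonempty boundary whose `(N-1)`-dimensional Hausdorff
measure is upper Ahlfors regular with constant `M`, then there is `c > 0` depending only on
`N, α, M` such that `∫_{∂Ω} |x-y|^{α-N} dℋ^{N-1}(y) ≤ c dist(x,∂Ω)^{α-1}` for all `x ∈ Ω`. -/
theorem stmt_5 (N : ℕ) (hN : 2 ≤ N) (α M : ℝ) (hα : α ∈ Ioo (0:ℝ) 1) (hM : 0 < M) :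
    ∃ c : ℝ, 0 < c ∧
      ∀ (Ω : Set (EuclideanSpace ℝ (Fin N))), IsOpen Ω → Bornology.IsBounded Ω →
        (frontier Ω).Nonempty →
        (∀ y ∈ frontier Ω, ∀ r > (0:ℝ),
          μH[(N:ℝ) - 1] (frontier Ω ∩ Metric.ball y r) ≤ ENNReal.ofReal (M * r ^ ((N:ℝ) - 1))) →
        ∀ x ∈ Ω,
          ∫⁻ y in frontier Ω, ENNReal.ofReal (dist x y ^ (α - N)) ∂(μH[(N:ℝ) - 1]) ≤
            ENNReal.ofReal (c * Metric.infDist x (frontier Ω) ^ (α - 1)) := by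
  obtain ⟨hα0, hα1⟩ := hα
  set q : ℝ := (2:ℝ) ^ (α - 1) with hqdef
  have hq0 : 0 < q := Real.rpow_pos_of_pos two_pos _
  have hq1 : q < 1 := Real.rpow_lt_one_of_one_lt_of_neg one_lt_two (by linarith)
  have h1q : 0 < 1 - q := by linarith
  refine ⟨M * (2:ℝ) ^ (2 * ((N:ℝ) - 1)) * (1 - q)⁻¹, by positivity, ?_⟩
  intro Ω hΩopen hΩb hfne hAhl x hx
  set F := frontier Ω with hF
  set d := Metric.infDist x F with hddef
  have hxF : x ∉ F := by
    rw [hF, hΩopen.frontier_eq]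
    intro h
    exact h.2 hx
  have hd : 0 < d := (isClosed_frontier.notMem_iff_infDist_pos hfne).mp hxF
  have hdle : ∀ y ∈ F, d ≤ dist x y := fun y hy => Metric.infDist_le_dist_of_mem hy
  obtain ⟨y₀, hy₀F, hy₀d⟩ : ∃ y ∈ F, dist x y < 2 * d := by
    rw [← Metric.infDist_lt_iff hfne]
    linarith
  set s : ℕ → Set (EuclideanSpace ℝ (Fin N)) := fun k =>
    F ∩ (Metric.ball x ((2:ℝ)^(k+1) * d) \ Metric.ball x ((2:ℝ)^k * d)) with hs
  have hcover : F ⊆ ⋃ k, s k := by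
    intro y hy
    have hdy : d ≤ dist x y := hdle y hy
    have hex : ∃ n : ℕ, dist x y < (2:ℝ)^(n+1) * d := by
      obtain ⟨n, hn⟩ := pow_unbounded_of_one_lt (dist x y / d) (one_lt_two (α := ℝ))
      rw [div_lt_iff₀ hd] at hn
      refine ⟨n, hn.trans_le ?_⟩
      have h2 : (2:ℝ)^n ≤ 2^(n+1) := pow_le_pow_right₀ one_le_two (Nat.le_succ n)
      nlinarith
    refine mem_iUnion.mpr ⟨Nat.find hex, hy, ?_, ?_⟩
    · rw [Metric.mem_ball, dist_comm]
      exact Nat.find_spec hex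
    · rw [Metric.mem_ball, dist_comm]
      cases' Nat.eq_zero_or_pos (Nat.find hex) with h0 h0
      · rw [h0]
        simp only [pow_zero, one_mul]
        exact not_lt.mpr hdy
      · have := Nat.find_min hex (Nat.sub_lt h0 one_pos)
        have hk : Nat.find hex - 1 + 1 = Nat.find hex := by omega
        rwa [hk] at this
  have hsmeas : ∀ k, μH[(N:ℝ) - 1] (s k) ≤
      ENNReal.ofReal (M * ((2:ℝ)^(k+2) * d) ^ ((N:ℝ) - 1)) := by
    intro k
    have hsub : s k ⊆ F ∩ Metric.ball y₀ ((2:ℝ)^(k+2) * d) := by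
      rintro y ⟨hyF, hyb, -⟩
      refine ⟨hyF, ?_⟩
      rw [Metric.mem_ball] at hyb ⊢
      have h2 : (2:ℝ) * d ≤ 2^(k+1) * d := by
        have : (2:ℝ) ≤ 2^(k+1) := by
          calc (2:ℝ) = 2^1 := (pow_one 2).symm
            _ ≤ 2^(k+1) := pow_le_pow_right₀ one_le_two (by omega)
        nlinarith
      have h3 : (2:ℝ)^(k+2) * d = 2^(k+1) * d + 2^(k+1) * d := by rw [pow_succ]; ring
      have h4 := dist_triangle y x y₀
      rw [h3]
      linarith
    exact (measure_mono hsub).trans (hAhl y₀ hy₀F _ (by positivity))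
  have hpiece : ∀ k, ∫⁻ y in s k, ENNReal.ofReal (dist x y ^ (α - N)) ∂(μH[(N:ℝ) - 1]) ≤
      ENNReal.ofReal (((2:ℝ)^k * d) ^ (α - N)) *
        ENNReal.ofReal (M * ((2:ℝ)^(k+2) * d) ^ ((N:ℝ) - 1)) := by
    intro k
    have hb : ∀ y ∈ s k, ENNReal.ofReal (dist x y ^ (α - N)) ≤
        ENNReal.ofReal (((2:ℝ)^k * d) ^ (α - N)) := by
      rintro y ⟨hyF, -, hyb⟩
      rw [Metric.mem_ball, dist_comm, not_lt] at hyb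
      refine ENNReal.ofReal_le_ofReal ?_
      have h2N : (2:ℝ) ≤ N := by exact_mod_cast hN
      exact Real.rpow_le_rpow_of_nonpos (by positivity) hyb (by linarith)
    calc ∫⁻ y in s k, ENNReal.ofReal (dist x y ^ (α - N)) ∂(μH[(N:ℝ) - 1]) ≤
        ∫⁻ _ in s k, ENNReal.ofReal (((2:ℝ)^k * d) ^ (α - N)) ∂(μH[(N:ℝ) - 1]) :=
          setLIntegral_mono measurable_const hb
      _ = ENNReal.ofReal (((2:ℝ)^k * d) ^ (α - N)) * μH[(N:ℝ) - 1] (s k) :=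
          setLIntegral_const _ _
      _ ≤ _ := mul_le_mul_right (hsmeas k) _
  calc ∫⁻ y in F, ENNReal.ofReal (dist x y ^ (α - N)) ∂(μH[(N:ℝ) - 1]) ≤
      ∫⁻ y in ⋃ k, s k, ENNReal.ofReal (dist x y ^ (α - N)) ∂(μH[(N:ℝ) - 1]) :=
        lintegral_mono_set hcover
    _ ≤ ∑' k, ∫⁻ y in s k, ENNReal.ofReal (dist x y ^ (α - N)) ∂(μH[(N:ℝ) - 1]) :=
        lintegral_iUnion_le _ _
    _ ≤ ∑' k, (ENNReal.ofReal (((2:ℝ)^k * d) ^ (α - N)) *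
        ENNReal.ofReal (M * ((2:ℝ)^(k+2) * d) ^ ((N:ℝ) - 1))) := ENNReal.tsum_le_tsum hpiece
    _ = ∑' k : ℕ, ENNReal.ofReal ((M * (2:ℝ) ^ (2 * ((N:ℝ) - 1)) * d ^ (α - 1)) * q ^ k) :=
        tsum_congr fun k => by
          rw [← ENNReal.ofReal_mul (by positivity), aux_pow_eq N α d M hd k]
    _ = ENNReal.ofReal (M * (2:ℝ) ^ (2 * ((N:ℝ) - 1)) * d ^ (α - 1)) *
        ∑' k : ℕ, (ENNReal.ofReal q) ^ k := by
        rw [← ENNReal.tsum_mul_left]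
        exact tsum_congr fun k => by
          rw [ENNReal.ofReal_mul (by positivity), ENNReal.ofReal_pow hq0.le]
    _ = ENNReal.ofReal (M * (2:ℝ) ^ (2 * ((N:ℝ) - 1)) * d ^ (α - 1)) *
        ENNReal.ofReal ((1 - q)⁻¹) := by
        rw [ENNReal.tsum_geometric, ← ENNReal.ofReal_one, ← ENNReal.ofReal_sub _ hq0.le,
          ENNReal.ofReal_inv_of_pos h1q]
    _ = ENNReal.ofReal (M * (2:ℝ) ^ (2 * ((N:ℝ) - 1)) * (1 - q)⁻¹ * d ^ (α - 1)) := by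
        rw [← ENNReal.ofReal_mul (by positivity)]
        ring_nf
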